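/- arXiv:1402.2619 — 5 statements merged into one kernel-verified Lean document; each statement's English description precedes it below -/
import Mathlib

section
/- Let K be a commutative ring, and let A, B be commutative K-algebras equipped with augmentations, i.e. K-algebra homomorphisms π_A : A →ₐ[K] K and π_B : B →ₐ[K] K. Consider the K-algebra homomorphism p : A ⊗[K] B → A × B determined by p(a ⊗ b) = (π_B(b) • a, π_A(a) • b). Then: (i) the range of p is exactly the subalgebra A ×_K B := { (a,b) ∈ A × B : π_A(a) = π_B(b) } (the fibered product of A and B over K); and (ii) the kernel of p equals the range of the K-linear map (ker π_A) ⊗[K] (ker π_B) → A ⊗[K] B induced by the inclusions ker π_A ⊆ A and ker π_B ⊆ B (via a ⊗ b ↦ a ⊗ b). In particular the sequence Å ⊗ B̊ → A ⊗ B → A ×_K B is exact, where Å = ker π_A and B̊ = ker π_B. -/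
open scoped TensorProduct

/-- Let `K` be a commutative ring and `A`, `B` augmented commutative `K`-algebras,
with augmentations `πA : A →ₐ[K] K`, `πB : B →ₐ[K] K`.  Let
`p : A ⊗[K] B →ₐ[K] A × B` be the `K`-algebra homomorphism determined by
`p (a ⊗ b) = (πB b • a, πA a • b)`.  Then (i) the range of `p` is exactly the
fibered product `A ×_K B = {(a,b) | πA a = πB b}`, and (ii) the kernel of `p` is
the range of the `K`-linear map `(ker πA) ⊗[K] (ker πB) → A ⊗[K] B` induced by the
inclusions.  This is the exactness of the sequence `Å ⊗ B̊ → A ⊗ B → A ×_K B`. -/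
theorem tensor_to_fiberProduct_range_and_kernel
    {K A B : Type*} [CommRing K] [CommRing A] [CommRing B]
    [Algebra K A] [Algebra K B]
    (πA : A →ₐ[K] K) (πB : B →ₐ[K] K)
    (p : A ⊗[K] B →ₐ[K] A × B)
    (hp : ∀ (a : A) (b : B), p (a ⊗ₜ[K] b) = (πB b • a, πA a • b)) :
    (∀ x : A × B, x ∈ p.range ↔ πA x.1 = πB x.2) ∧
    (∀ z : A ⊗[K] B, z ∈ RingHom.ker p.toRingHom ↔
      z ∈ LinearMap.range (TensorProduct.map
        ((RingHom.ker πA.toRingHom).restrictScalars K).subtype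
        ((RingHom.ker πB.toRingHom).restrictScalars K).subtype)) := by
  set M := TensorProduct.map
      ((RingHom.ker πA.toRingHom).restrictScalars K).subtype
      ((RingHom.ker πB.toRingHom).restrictScalars K).subtype with hM
  -- key identity
  have key : ∀ z : A ⊗[K] B,
      z - ((p z).1 ⊗ₜ[K] (1 : B)) - ((1 : A) ⊗ₜ[K] (p z).2)
        + πA (p z).1 • ((1 : A) ⊗ₜ[K] (1 : B)) ∈ LinearMap.range M := by
    intro z
    induction z using TensorProduct.induction_on with
    | zero => simp
    | tmul a b =>
        rw [hp]
        have ha : a - algebraMap K A (πA a) ∈ (RingHom.ker πA.toRingHom).restrictScalars K := by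
          simp [RingHom.mem_ker]
        have hb : b - algebraMap K B (πB b) ∈ (RingHom.ker πB.toRingHom).restrictScalars K := by
          simp [RingHom.mem_ker]
        refine ⟨(⟨_, ha⟩ : _) ⊗ₜ[K] (⟨_, hb⟩ : _), ?_⟩
        simp only [hM, TensorProduct.map_tmul, Submodule.coe_subtype]
        simp only [TensorProduct.sub_tmul, TensorProduct.tmul_sub,
          Algebra.algebraMap_eq_smul_one, TensorProduct.smul_tmul, TensorProduct.tmul_smul,
          smul_smul, map_smul, smul_eq_mul, mul_comm]
        module
    | add z w hz hw =>
        have := Submodule.add_mem _ hz hw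
        convert this using 1
        simp only [map_add, Prod.fst_add, Prod.snd_add, TensorProduct.add_tmul,
          TensorProduct.tmul_add, add_smul]
        abel
  -- p vanishes on the range of M
  have hpM : ∀ w, p (M w) = 0 := by
    intro w
    induction w using TensorProduct.induction_on with
    | zero => rw [hM, map_zero, map_zero]
    | tmul a b =>
        obtain ⟨a, ha⟩ := a
        obtain ⟨b, hb⟩ := b
        rw [Submodule.restrictScalars_mem, RingHom.mem_ker] at ha hb
        have ha' : πA a = 0 := ha
        have hb' : πB b = 0 := hb
        rw [hM, TensorProduct.map_tmul, hp]
        show (πB b • a, πA a • b) = 0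
        simp [ha', hb']
    | add z w hz hw => rw [map_add, map_add, hz, hw, add_zero]
  have hfib : ∀ z : A ⊗[K] B, πA (p z).1 = πB (p z).2 := by
    intro z
    induction z using TensorProduct.induction_on with
    | zero => simp
    | tmul a b => simp [hp, mul_comm]
    | add z w hz hw => simp [map_add, hz, hw]
  constructor
  · intro x
    constructor
    · rintro ⟨z, rfl⟩
      exact hfib z
    · intro hx
      have hcalc : p (x.1 ⊗ₜ[K] (1 : B) + (1 : A) ⊗ₜ[K] x.2
          - πA x.1 • ((1 : A) ⊗ₜ[K] (1 : B))) = x := by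
        rw [map_sub, map_add, map_smul, hp, hp, hp]
        ext
        · simp [hx]
        · simp
      exact ⟨_, hcalc⟩
  · intro z
    replace key := key z
    constructor
    · intro hz
      replace hz : p z = 0 := hz
      rw [hz] at key
      simpa using key
    · rintro ⟨w, rfl⟩
      exact hpM w
end

section
/- (Reconstruction of a set-theoretic manifold from local data.) Let V be a type, I an index type, and suppose given for all i, j ∈ I a subset V_ij ⊆ V and a map φ_ij : V → V such that: V_ij ⊆ V_ii for all i,j; φ_ij restricts to a bijection from V_ji onto V_ij; φ_ii is the identity on V_ii; and the cocycle relation holds where defined: for all i,j,k and every x ∈ V_kj with φ_jk(x) ∈ V_ji, one has x ∈ V_ki and φ_ij(φ_jk(x)) = φ_ik(x). Then there exist a type M, subsets U_i ⊆ M with M = ⋃_{i∈I} U_i, and bijections ψ_i : U_i → V_ii, such that for all i, j: ψ_j(U_i ∩ U_j) = V_ji and for every y ∈ V_ji, ψ_i(ψ_j⁻¹(y)) = φ_ij(y). (Concretely, M may be taken as the quotient of S = { (i,x) : x ∈ V_ii } by the relation (i,x) ∼ (j,y) ⇔ y ∈ V_ji and φ_ij(y) = x, which is an equivalence relation.) 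-/
universe u v

namespace STMR

variable {V : Type u} {I : Type v} (Vij : I → I → Set V) (φ : I → I → V → V)

def S : Type (max u v) := {p : I × V // p.2 ∈ Vij p.1 p.1}

def r (a b : S Vij) : Prop :=
  b.1.2 ∈ Vij b.1.1 a.1.1 ∧ φ a.1.1 b.1.1 b.1.2 = a.1.2

variable (hsub : ∀ i j, Vij i j ⊆ Vij i i)
    (hbij : ∀ i j, Set.BijOn (φ i j) (Vij j i) (Vij i j))
    (hid : ∀ i, ∀ x ∈ Vij i i, φ i i x = x)
    (hcoc : ∀ i j k, ∀ x ∈ Vij k j, φ j k x ∈ Vij j i →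
      x ∈ Vij k i ∧ φ i j (φ j k x) = φ i k x)

include hbij hid hcoc in
theorem r_equiv : Equivalence (r Vij φ) := by
  constructor
  · exact fun a => ⟨a.2, hid _ _ a.2⟩
  · intro a b h
    obtain ⟨⟨i, x⟩, hx⟩ := a
    obtain ⟨⟨j, y⟩, hy⟩ := b
    obtain ⟨h1, h2⟩ := h
    dsimp only [r] at h1 h2 ⊢
    have hx' : x ∈ Vij i j := by rw [← h2]; exact (hbij i j).mapsTo h1
    have hc := hcoc j i j y h1 (by rw [h2]; exact hx')
    refine ⟨hx', ?_⟩
    have h3 := hc.2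
    rw [h2] at h3
    rw [h3, hid j y hy]
  · intro a b c hab hbc
    obtain ⟨⟨i, x⟩, hx⟩ := a
    obtain ⟨⟨j, y⟩, hy⟩ := b
    obtain ⟨⟨k, z⟩, hz⟩ := c
    obtain ⟨h1, h2⟩ := hab
    obtain ⟨h3, h4⟩ := hbc
    dsimp only [r] at h1 h2 h3 h4 ⊢
    have hc := hcoc i j k z h3 (by rw [h4]; exact h1)
    refine ⟨hc.1, ?_⟩
    rw [← hc.2, h4, h2]

def sd : Setoid (S Vij) := ⟨r Vij φ, r_equiv Vij φ hbij hid hcoc⟩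

def M : Type (max u v) := Quotient (sd Vij φ hbij hid hcoc)

def mk (i : I) (x : V) (hx : x ∈ Vij i i) : M Vij φ hbij hid hcoc :=
  Quotient.mk (sd Vij φ hbij hid hcoc) ⟨(i, x), hx⟩

theorem mk_congr {i : I} {x y : V} {hx : x ∈ Vij i i} {hy : y ∈ Vij i i} (h : x = y) :
    mk Vij φ hbij hid hcoc i x hx = mk Vij φ hbij hid hcoc i y hy := by
  subst h; rfl

theorem mk_eq_mk {i j : I} {x y : V} {hx : x ∈ Vij i i} {hy : y ∈ Vij j j} :
    mk Vij φ hbij hid hcoc i x hx = mk Vij φ hbij hid hcoc j y hy ↔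
      y ∈ Vij j i ∧ φ i j y = x :=
  ⟨fun h => Quotient.exact h, fun h => Quotient.sound h⟩

def U (i : I) : Set (M Vij φ hbij hid hcoc) :=
  {m | ∃ x, ∃ hx : x ∈ Vij i i, m = mk Vij φ hbij hid hcoc i x hx}

noncomputable def ψ [Nonempty V] (i : I) (m : M Vij φ hbij hid hcoc) : V :=
  Classical.epsilon (fun x => ∃ hx : x ∈ Vij i i, m = mk Vij φ hbij hid hcoc i x hx)

theorem ψ_spec [Nonempty V] {i : I} {m : M Vij φ hbij hid hcoc}
    (hm : m ∈ U Vij φ hbij hid hcoc i) :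
    ∃ hx : ψ Vij φ hbij hid hcoc i m ∈ Vij i i,
      m = mk Vij φ hbij hid hcoc i (ψ Vij φ hbij hid hcoc i m) hx := by
  obtain ⟨x, hx, hmx⟩ := hm
  exact Classical.epsilon_spec
    (p := fun x => ∃ hx : x ∈ Vij i i, m = mk Vij φ hbij hid hcoc i x hx) ⟨x, hx, hmx⟩

include hid in
theorem mk_inj {i : I} {x y : V} {hx : x ∈ Vij i i} {hy : y ∈ Vij i i}
    (h : mk Vij φ hbij hid hcoc i x hx = mk Vij φ hbij hid hcoc i y hy) : x = y := by
  have h' := (mk_eq_mk Vij φ hbij hid hcoc).mp h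
  rw [← h'.2, hid i y hy]

end STMR

/-- Reconstruction of a set-theoretic manifold from local gluing data: given a model
type `V`, an index type `I`, subsets `Vij i j ⊆ V` and maps `φ i j : V → V` such
that `Vij i j ⊆ Vij i i`, `φ i j` restricts to a bijection from `Vij j i` onto
`Vij i j`, `φ i i` is the identity on `Vij i i`, and the cocycle relation holds
where defined, there exist a type `M`, a covering family of subsets `U i ⊆ M` and
bijections `ψ i : U i → Vij i i` with `ψ j '' (U i ∩ U j) = Vij j i` and
`ψ i ∘ (ψ j)⁻¹ = φ i j` on `Vij j i`. -/
theorem setTheoreticManifold_reconstruction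
    {V : Type u} {I : Type v} (Vij : I → I → Set V) (φ : I → I → V → V)
    (hsub : ∀ i j, Vij i j ⊆ Vij i i)
    (hbij : ∀ i j, Set.BijOn (φ i j) (Vij j i) (Vij i j))
    (hid : ∀ i, ∀ x ∈ Vij i i, φ i i x = x)
    (hcoc : ∀ i j k, ∀ x ∈ Vij k j, φ j k x ∈ Vij j i →
      x ∈ Vij k i ∧ φ i j (φ j k x) = φ i k x) :
    ∃ (M : Type (max u v)) (U : I → Set M) (ψ : I → M → V),
      (⋃ i, U i) = Set.univ ∧
      (∀ i, Set.BijOn (ψ i) (U i) (Vij i i)) ∧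
      (∀ i j, ψ j '' (U i ∩ U j) = Vij j i) ∧
      (∀ i j, ∀ m ∈ U i ∩ U j, ψ i m = φ i j (ψ j m)) := by
  rcases isEmpty_or_nonempty V with hV | hV
  · refine ⟨PEmpty, fun _ => ∅, fun _ m => m.elim, ?_, ?_, ?_, ?_⟩
    · exact Set.eq_univ_of_forall fun m => m.elim
    · intro i
      have h1 : Vij i i = ∅ := Set.eq_empty_of_isEmpty _
      rw [h1]
      exact Set.bijOn_empty _
    · intro i j
      have h1 : Vij j i = ∅ := Set.eq_empty_of_isEmpty _
      simp [h1]
    · intro i j m hm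
      exact m.elim
  · open STMR in
    refine ⟨M Vij φ hbij hid hcoc, U Vij φ hbij hid hcoc, ψ Vij φ hbij hid hcoc,
      ?_, ?_, ?_, ?_⟩
    · apply Set.eq_univ_of_forall
      intro m
      obtain ⟨⟨⟨i, x⟩, hx⟩, hrep⟩ := Quotient.exists_rep m
      exact Set.mem_iUnion.mpr ⟨i, x, hx, hrep.symm⟩
    · intro i
      refine ⟨fun m hm => (ψ_spec Vij φ hbij hid hcoc hm).1, ?_, ?_⟩
      · intro m hm m' hm' heq
        obtain ⟨h1, h2⟩ := ψ_spec Vij φ hbij hid hcoc hm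
        obtain ⟨h1', h2'⟩ := ψ_spec Vij φ hbij hid hcoc hm'
        rw [h2, h2']
        exact mk_congr Vij φ hbij hid hcoc heq
      · intro x hx
        have hmem : mk Vij φ hbij hid hcoc i x hx ∈ U Vij φ hbij hid hcoc i := ⟨x, hx, rfl⟩
        refine ⟨mk Vij φ hbij hid hcoc i x hx, hmem, ?_⟩
        obtain ⟨h1, h2⟩ := ψ_spec Vij φ hbij hid hcoc hmem
        exact (mk_inj Vij φ hbij hid hcoc h2).symm
    · intro i j
      ext y
      constructor
      · rintro ⟨m, ⟨hmi, hmj⟩, rfl⟩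
        obtain ⟨h1, h2⟩ := ψ_spec Vij φ hbij hid hcoc hmi
        obtain ⟨h1', h2'⟩ := ψ_spec Vij φ hbij hid hcoc hmj
        exact ((mk_eq_mk Vij φ hbij hid hcoc).mp (h2.symm.trans h2')).1
      · intro hy
        have hyj : y ∈ Vij j j := hsub j i hy
        have hxi : φ i j y ∈ Vij i i := hsub i j ((hbij i j).mapsTo hy)
        have hmemj : mk Vij φ hbij hid hcoc j y hyj ∈ U Vij φ hbij hid hcoc j := ⟨y, hyj, rfl⟩
        refine ⟨mk Vij φ hbij hid hcoc j y hyj, ⟨?_, hmemj⟩, ?_⟩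
        · exact ⟨φ i j y, hxi, ((mk_eq_mk Vij φ hbij hid hcoc).mpr ⟨hy, rfl⟩).symm⟩
        · obtain ⟨h1, h2⟩ := ψ_spec Vij φ hbij hid hcoc hmemj
          exact (mk_inj Vij φ hbij hid hcoc h2).symm
    · intro i j m hm
      obtain ⟨hmi, hmj⟩ := hm
      obtain ⟨h1, h2⟩ := ψ_spec Vij φ hbij hid hcoc hmi
      obtain ⟨h1', h2'⟩ := ψ_spec Vij φ hbij hid hcoc hmj
      exact ((mk_eq_mk Vij φ hbij hid hcoc).mp (h2.symm.trans h2')).2.symm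
end

section
/- Let R be a ring (not necessarily commutative) and consider the iterated dual numbers S = DualNumber (DualNumber R). Write ι : R → S for the double inclusion r ↦ inl (inl r), ε₁ := inl ε ∈ S and ε₂ := ε ∈ S (the dual-number generators of the inner and outer extension, so ε₁² = 0 = ε₂²). For X, Y ∈ R, the elements u := 1 + ε₁·ι(X) and v := 1 + ε₂·ι(Y) are units of S, and their group commutator satisfies u·v·u⁻¹·v⁻¹ = 1 + ε₁·ε₂·ι(X·Y − Y·X). (This is the formula [ε₁X, ε₂Y]_grp = ε₁ε₂[X,Y]_alg defining the Lie bracket via the second tangent group, in the linear case.) -/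
open TrivSqZeroExt

section Aux

variable {R : Type*} [Ring R]

private lemma aux_b0 (r : R) : (DualNumber.eps : DualNumber R) * inl r = inr r := by
  rw [DualNumber.eps, inr_mul_inl, MulOpposite.smul_eq_mul_unop]
  simp

private lemma aux_a (r : R) : inl (DualNumber.eps : DualNumber R) * inl (inl r)
    = (inl (inr r) : DualNumber (DualNumber R)) := by
  rw [inl_mul_inl, DualNumber.eps, inr_mul_inl, MulOpposite.smul_eq_mul_unop]
  simp

private lemma aux_b (r : R) : (DualNumber.eps : DualNumber (DualNumber R)) * inl (inl r)
    = (inr (inl r) : DualNumber (DualNumber R)) := by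
  rw [DualNumber.eps, inr_mul_inl, MulOpposite.smul_eq_mul_unop]
  simp

private lemma aux_c (r : R) : inl (DualNumber.eps : DualNumber R)
    * (DualNumber.eps : DualNumber (DualNumber R)) * inl (inl r)
    = (inr (inr r) : DualNumber (DualNumber R)) := by
  rw [show (DualNumber.eps : DualNumber (DualNumber R)) = inr (1 : DualNumber R) from rfl,
    inl_mul_inr, smul_eq_mul, mul_one, inr_mul_inl, MulOpposite.smul_eq_mul_unop,
    MulOpposite.unop_op, aux_b0]

end Aux

set_option maxHeartbeats 1000000 in
/-- In the iterated dual numbers `S = DualNumber (DualNumber R)` over a ring `R`,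
with `ι r = inl (inl r)`, `ε₁ = inl ε` and `ε₂ = ε` (so `ε₁² = 0 = ε₂²`), the
elements `u = 1 + ε₁ ι X` and `v = 1 + ε₂ ι Y` are units and their group
commutator satisfies `u v u⁻¹ v⁻¹ = 1 + ε₁ ε₂ ι (X Y - Y X)`. -/
theorem second_tangent_group_commutator {R : Type*} [Ring R] (X Y : R) :
    ∃ u v : (DualNumber (DualNumber R))ˣ,
      (u : DualNumber (DualNumber R))
          = 1 + inl (DualNumber.eps : DualNumber R) * inl (inl X) ∧
      (v : DualNumber (DualNumber R))
          = 1 + (DualNumber.eps : DualNumber (DualNumber R)) * inl (inl Y) ∧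
      (↑(u * v * u⁻¹ * v⁻¹) : DualNumber (DualNumber R))
          = 1 + inl (DualNumber.eps : DualNumber R)
              * (DualNumber.eps : DualNumber (DualNumber R))
              * inl (inl (X * Y - Y * X)) := by
  have hA := aux_a X
  have hB := aux_b Y
  set a : DualNumber (DualNumber R) := inl (inr X) with ha
  set b : DualNumber (DualNumber R) := inr (inl Y) with hb
  have haa : a * a = 0 := by
    simp only [ha, inl_mul_inl, inr_mul_inr, inl_zero]
  have hbb : b * b = 0 := inr_mul_inr _ _ _
  have hab : a * b = inr (inr (X * Y)) := by
    simp only [ha, hb, inl_mul_inr, smul_eq_mul, inr_mul_inl,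
      MulOpposite.smul_eq_mul_unop, MulOpposite.unop_op]
  have hba : b * a = inr (inr (Y * X)) := by
    simp only [ha, hb, inl_mul_inr, smul_eq_mul, inr_mul_inl,
      MulOpposite.smul_eq_mul_unop, MulOpposite.unop_op]
  have haba : a * b * a = 0 := by
    rw [hab, ha]
    simp only [inr_mul_inl, MulOpposite.smul_eq_mul_unop, MulOpposite.unop_op,
      smul_eq_mul, inr_mul_inr, inr_zero]
  have hbab : b * a * b = 0 := by rw [hba, hb, inr_mul_inr]
  have habab : a * b * (a * b) = 0 := by rw [hab, inr_mul_inr]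
  have hu : (1 + a) * (1 - a) = 1 := by
    rw [mul_sub, mul_one, add_mul, one_mul, haa]; abel
  have hu' : (1 - a) * (1 + a) = 1 := by
    rw [sub_mul, one_mul, mul_add, mul_one, haa]; abel
  have hv : (1 + b) * (1 - b) = 1 := by
    rw [mul_sub, mul_one, add_mul, one_mul, hbb]; abel
  have hv' : (1 - b) * (1 + b) = 1 := by
    rw [sub_mul, one_mul, mul_add, mul_one, hbb]; abel
  refine ⟨⟨1 + a, 1 - a, hu, hu'⟩, ⟨1 + b, 1 - b, hv, hv'⟩, congrArg (1 + ·) hA.symm, congrArg (1 + ·) hB.symm, ?_⟩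
  have hrhs : inl (DualNumber.eps : DualNumber R)
        * (DualNumber.eps : DualNumber (DualNumber R)) * inl (inl (X * Y - Y * X))
      = a * b - b * a := by
    rw [aux_c, hab, hba, ← inr_sub, ← inr_sub]
  rw [hrhs]
  show (1 + a) * (1 + b) * (1 - a) * (1 - b) = 1 + (a * b - b * a)
  have h1 : (1 + a) * (1 + b) = 1 + a + b + a * b := by
    rw [add_mul, one_mul, mul_add, mul_one]; abel
  have ka : (1 + a + b + a * b) * a = a + b * a := by
    rw [add_mul, add_mul, add_mul, one_mul, haa, haba]; abel
  have kb : (1 + a + b + a * b) * b = b + a * b := by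
    rw [add_mul, add_mul, add_mul, one_mul, mul_assoc a b b, hbb, mul_zero]; abel
  have kc : (1 + a + b + a * b) * (a * b) = a * b := by
    rw [add_mul, add_mul, add_mul, one_mul, ← mul_assoc a a b, haa, zero_mul,
      ← mul_assoc b a b, hbab, habab]; abel
  have h2 : (1 - a) * (1 - b) = 1 - a - b + a * b := by
    rw [sub_mul, one_mul, mul_sub, mul_one]; abel
  calc (1 + a) * (1 + b) * (1 - a) * (1 - b)
      = (1 + a + b + a * b) * (1 - a - b + a * b) := by
        rw [mul_assoc, h2, h1]
    _ = 1 + (a * b - b * a) := by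
        rw [mul_add, mul_sub, mul_sub, mul_one, ka, kb, kc]; abel
end

section
/- Let A be a ring (not necessarily commutative). Let φ : Aˣ →* MulAut (Multiplicative A) be the conjugation action, φ(u)(x) = u·x·u⁻¹ (written multiplicatively on the additive group of A). Then the map from the semidirect product (Multiplicative A) ⋊[φ] Aˣ to the unit group (DualNumber A)ˣ sending (x, u) to the unit (1 + ε·x)·inl(u) is a group isomorphism. In particular the unit group of the tangent ring DualNumber A is a semidirect product of Aˣ with the additive group (A, +), the projection (DualNumber A)ˣ → Aˣ induced by the ε = 0 projection is a split surjective group homomorphism, and its kernel {1 + εx : x ∈ A} is abelian with (1+εx)(1+εy) = 1 + ε(x+y). -/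
open TrivSqZeroExt SemidirectProduct

variable {A : Type*} [Ring A]

/-- Conjugation by a unit `u : Aˣ` as a multiplicative automorphism of the additive
group of `A`, written multiplicatively. -/
def unitConjAut (u : Aˣ) : MulAut (Multiplicative A) where
  toFun x := Multiplicative.ofAdd (↑u * x.toAdd * ↑u⁻¹)
  invFun x := Multiplicative.ofAdd (↑u⁻¹ * x.toAdd * ↑u)
  left_inv x := by
    simp [mul_assoc]
  right_inv x := by
    simp [mul_assoc]
  map_mul' x y := by
    simp [mul_add, add_mul]

/-- The conjugation action `φ : Aˣ →* MulAut (Multiplicative A)`,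
`φ u x = u · x · u⁻¹`. -/
def unitsConjHom : Aˣ →* MulAut (Multiplicative A) where
  toFun := unitConjAut
  map_one' := by
    ext x
    simp [unitConjAut]
  map_mul' u v := by
    ext x
    simp [unitConjAut, mul_assoc]

lemma eps_mul_inl' (z : A) : (DualNumber.eps : DualNumber A) * inl z = inr z := by
  rw [DualNumber.eps, inr_mul_inl]
  simp

lemma key_mul' (x y : A) :
    ((1 : DualNumber A) + DualNumber.eps * inl x)
        * (1 + DualNumber.eps * inl y)
      = 1 + DualNumber.eps * inl (x + y) := by
  simp only [eps_mul_inl', mul_add, add_mul, one_mul, mul_one, inr_mul_inr]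
  rw [add_zero, add_assoc, ← inr_add]

/-- the unit `(1 + ε x) · inl u` of the dual numbers. -/
def dnUnit (x : A) (u : Aˣ) : (DualNumber A)ˣ where
  val := inl (↑u : A) + inr (x * ↑u)
  inv := inl (↑u⁻¹ : A) + inr (-((↑u⁻¹ : A) * x))
  val_inv := by
    apply TrivSqZeroExt.ext <;>
      simp [mul_add, add_mul, smul_eq_mul, op_smul_eq_mul, mul_assoc]
  inv_val := by
    apply TrivSqZeroExt.ext <;>
      simp [mul_add, add_mul, smul_eq_mul, op_smul_eq_mul, mul_assoc, ← mul_assoc]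

lemma dnUnit_spec (x : A) (u : Aˣ) :
    (↑(dnUnit x u) : DualNumber A)
      = (1 + DualNumber.eps * inl x) * inl (↑u : A) := by
  rw [eps_mul_inl', add_mul, one_mul, inr_mul_inl, op_smul_eq_mul]
  rfl

/-- the `ε = 0` projection on units. -/
def fstUnit (w : (DualNumber A)ˣ) : Aˣ where
  val := fst (↑w : DualNumber A)
  inv := fst (↑w⁻¹ : DualNumber A)
  val_inv := by rw [← fst_mul, Units.mul_inv, fst_one]
  inv_val := by rw [← fst_mul, Units.inv_mul, fst_one]

def dnEquiv : (Multiplicative A) ⋊[(unitsConjHom : Aˣ →* MulAut (Multiplicative A))] Aˣ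
    ≃* (DualNumber A)ˣ where
  toFun g := dnUnit g.left.toAdd g.right
  invFun w := ⟨Multiplicative.ofAdd (snd (↑w : DualNumber A) * fst (↑w⁻¹ : DualNumber A)),
    fstUnit w⟩
  left_inv g := by
    ext
    · simp [dnUnit, mul_assoc]
    · simp [dnUnit, fstUnit]
  right_inv w := by
    apply Units.ext
    apply TrivSqZeroExt.ext
    · simp [dnUnit, fstUnit]
    · have h : fst (↑w⁻¹ : DualNumber A) * fst (↑w : DualNumber A) = 1 := by
        rw [← fst_mul, Units.inv_mul, fst_one]
      simp [dnUnit, fstUnit, mul_assoc, h]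
  map_mul' g h := by
    apply Units.ext
    apply TrivSqZeroExt.ext
    · simp [dnUnit]
    · simp [dnUnit, unitsConjHom, unitConjAut, mul_add, add_mul, smul_eq_mul,
        op_smul_eq_mul, mul_assoc]
      erw [SemidirectProduct.mul_left, SemidirectProduct.mul_right]
      simp [unitsConjHom, unitConjAut, mul_add, add_mul, mul_assoc]

/-- The unit group of the tangent ring `DualNumber A` is the semidirect product of
`Aˣ` with the additive group `(A, +)` via conjugation: the map sending `(x, u)` to
the unit `(1 + ε x) · inl u` is a group isomorphism
`(Multiplicative A) ⋊[φ] Aˣ ≃* (DualNumber A)ˣ`.  Moreover the kernel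
`{1 + ε x}` is abelian, with `(1 + ε x)(1 + ε y) = 1 + ε (x + y)`. -/
theorem dualNumber_units_semidirectProduct :
    (∃ e : (Multiplicative A) ⋊[(unitsConjHom : Aˣ →* MulAut (Multiplicative A))] Aˣ
        ≃* (DualNumber A)ˣ,
      ∀ g : (Multiplicative A) ⋊[(unitsConjHom : Aˣ →* MulAut (Multiplicative A))] Aˣ,
        (↑(e g) : DualNumber A)
          = (1 + DualNumber.eps * inl (Multiplicative.toAdd g.left))
              * inl (↑g.right : A)) ∧
    (∀ x y : A,
      ((1 : DualNumber A) + DualNumber.eps * inl x)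
          * (1 + DualNumber.eps * inl y)
        = 1 + DualNumber.eps * inl (x + y)) := by
  exact ⟨⟨dnEquiv, fun g => dnUnit_spec _ _⟩, key_mul'⟩
end

section
/- Let K be a commutative ring, A and B commutative K-algebras with augmentations π_A : A →ₐ[K] K and π_B : B →ₐ[K] K, and let S = A ×_K B := { (a,b) ∈ A × B : π_A(a) = π_B(b) } be the fibered product subalgebra of A × B. Let V be any K-module. Consider the K-linear map Φ : V ⊗[K] S → (V ⊗[K] A) × (V ⊗[K] B) induced by the two coordinate projections S → A and S → B. Then Φ is injective, and its range is exactly the set of pairs (u, w) with π̃_A(u) = π̃_B(w), where π̃_A : V ⊗ A → V and π̃_B : V ⊗ B → V are the maps induced by π_A and π_B (composed with the canonical isomorphism V ⊗ K ≅ V). In other words, V ⊗ (A ×_K B) is canonically the fiber product of V ⊗ A and V ⊗ B over V. -/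
open scoped TensorProduct

section Aux

variable {K A B V : Type*} [CommRing K] [CommRing A] [CommRing B]
  [Algebra K A] [Algebra K B] [AddCommGroup V] [Module K V]

/-- The section `A → S`, `a ↦ (a, algebraMap K B (πA a))`. -/
def auxFA (πA : A →ₐ[K] K) (πB : B →ₐ[K] K) (S : Submodule K (A × B))
    (hS : ∀ x : A × B, x ∈ S ↔ πA x.1 = πB x.2) : A →ₗ[K] S :=
  LinearMap.codRestrict S
    (LinearMap.prod LinearMap.id ((Algebra.linearMap K B).comp πA.toLinearMap))
    fun a => (hS _).2 (by simp)

@[simp] lemma auxFA_apply (πA : A →ₐ[K] K) (πB : B →ₐ[K] K) (S : Submodule K (A × B))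
    (hS : ∀ x : A × B, x ∈ S ↔ πA x.1 = πB x.2) (a : A) :
    (auxFA πA πB S hS a : A × B) = (a, algebraMap K B (πA a)) := rfl

/-- The map `B → S`, `b ↦ (0, b - algebraMap K B (πB b))`. -/
def auxFB (πA : A →ₐ[K] K) (πB : B →ₐ[K] K) (S : Submodule K (A × B))
    (hS : ∀ x : A × B, x ∈ S ↔ πA x.1 = πB x.2) : B →ₗ[K] S :=
  LinearMap.codRestrict S
    (LinearMap.prod 0 (LinearMap.id - (Algebra.linearMap K B).comp πB.toLinearMap))
    fun b => (hS _).2 (by simp)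

@[simp] lemma auxFB_apply (πA : A →ₐ[K] K) (πB : B →ₐ[K] K) (S : Submodule K (A × B))
    (hS : ∀ x : A × B, x ∈ S ↔ πA x.1 = πB x.2) (b : B) :
    (auxFB πA πB S hS b : A × B) = (0, b - algebraMap K B (πB b)) := rfl

end Aux

/-- Let `K` be a commutative ring, `A`, `B` augmented commutative `K`-algebras with
augmentations `πA`, `πB`, and `S = A ×_K B = {(a,b) | πA a = πB b}` the fibered
product, viewed as a `K`-submodule of `A × B`.  For any `K`-module `V`, the
`K`-linear map `Φ : V ⊗[K] S → (V ⊗[K] A) × (V ⊗[K] B)` induced by the two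
coordinate projections is injective, and its range consists exactly of the pairs
`(u, w)` with `π̃A u = π̃B w`, where `π̃A : V ⊗ A → V` and `π̃B : V ⊗ B → V` are
induced by the augmentations (composed with `V ⊗ K ≅ V`).  In other words,
`V ⊗ (A ×_K B)` is the fiber product of `V ⊗ A` and `V ⊗ B` over `V`. -/
theorem tensor_fiberProduct_is_fiberProduct
    {K A B V : Type*} [CommRing K] [CommRing A] [CommRing B]
    [Algebra K A] [Algebra K B] [AddCommGroup V] [Module K V]
    (πA : A →ₐ[K] K) (πB : B →ₐ[K] K)
    (S : Submodule K (A × B))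
    (hS : ∀ x : A × B, x ∈ S ↔ πA x.1 = πB x.2)
    (Φ : V ⊗[K] S →ₗ[K] (V ⊗[K] A) × (V ⊗[K] B))
    (hΦ : ∀ (v : V) (s : S),
      Φ (v ⊗ₜ[K] s) = (v ⊗ₜ[K] (s : A × B).1, v ⊗ₜ[K] (s : A × B).2))
    (pA : V ⊗[K] A →ₗ[K] V) (hpA : ∀ (v : V) (a : A), pA (v ⊗ₜ[K] a) = πA a • v)
    (pB : V ⊗[K] B →ₗ[K] V) (hpB : ∀ (v : V) (b : B), pB (v ⊗ₜ[K] b) = πB b • v) :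
    Function.Injective Φ ∧
    ∀ q : (V ⊗[K] A) × (V ⊗[K] B),
      q ∈ LinearMap.range Φ ↔ pA q.1 = pB q.2 := by
  set ρA : V ⊗[K] A →ₗ[K] V ⊗[K] S := LinearMap.lTensor V (auxFA πA πB S hS) with hρA
  set ρB : V ⊗[K] B →ₗ[K] V ⊗[K] S := LinearMap.lTensor V (auxFB πA πB S hS) with hρB
  -- Ψ is a left inverse of Φ
  set Ψ : (V ⊗[K] A) × (V ⊗[K] B) →ₗ[K] V ⊗[K] S :=
    ρA ∘ₗ LinearMap.fst K _ _ + ρB ∘ₗ LinearMap.snd K _ _ with hΨ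
  have hΨΦ : Ψ ∘ₗ Φ = LinearMap.id := by
    apply TensorProduct.ext'
    intro v s
    have hmem : πA (s : A × B).1 = πB (s : A × B).2 := (hS _).1 s.2
    simp only [LinearMap.comp_apply, hΦ, LinearMap.id_apply, hΨ, LinearMap.add_apply,
      LinearMap.fst_apply, LinearMap.snd_apply, hρA, hρB, LinearMap.lTensor_tmul]
    rw [← TensorProduct.tmul_add]
    congr 1
    apply Subtype.ext
    simp only [Submodule.coe_add, auxFA_apply, auxFB_apply, Prod.mk_add_mk, hmem]
    ext <;> simp
  have hinj : Function.Injective Φ := by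
    intro x y hxy
    have := congrArg Ψ hxy
    have hx := congrFun (congrArg DFunLike.coe hΨΦ) x
    have hy := congrFun (congrArg DFunLike.coe hΨΦ) y
    simp only [LinearMap.comp_apply, LinearMap.id_apply] at hx hy
    rw [← hx, ← hy, this]
  refine ⟨hinj, fun q => ?_⟩
  constructor
  · rintro ⟨t, rfl⟩
    have : pA ∘ₗ (LinearMap.fst K _ _ ∘ₗ Φ) = pB ∘ₗ (LinearMap.snd K _ _ ∘ₗ Φ) := by
      apply TensorProduct.ext'
      intro v s
      have hmem : πA (s : A × B).1 = πB (s : A × B).2 := (hS _).1 s.2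
      simp [hΦ, hpA, hpB, hmem]
    have := congrFun (congrArg DFunLike.coe this) t
    simpa using this
  · intro h
    refine ⟨ρA q.1 + ρB q.2, ?_⟩
    set jB : V →ₗ[K] V ⊗[K] B := (TensorProduct.mk K V B).flip 1 with hjB
    have h1 : LinearMap.fst K _ _ ∘ₗ Φ ∘ₗ ρA = LinearMap.id := by
      apply TensorProduct.ext'
      intro v a
      simp [hρA, hΦ]
    have h2 : LinearMap.snd K _ _ ∘ₗ Φ ∘ₗ ρA = jB ∘ₗ pA := by
      apply TensorProduct.ext'
      intro v a
      simp only [LinearMap.comp_apply, hρA, LinearMap.lTensor_tmul, hΦ, LinearMap.snd_apply,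
        auxFA_apply, hjB, TensorProduct.mk_apply, LinearMap.flip_apply, hpA]
      rw [TensorProduct.smul_tmul, Algebra.algebraMap_eq_smul_one]
    have h3 : LinearMap.fst K _ _ ∘ₗ Φ ∘ₗ ρB = 0 := by
      apply TensorProduct.ext'
      intro v b
      simp [hρB, hΦ]
    have h4 : LinearMap.snd K _ _ ∘ₗ Φ ∘ₗ ρB = LinearMap.id - jB ∘ₗ pB := by
      apply TensorProduct.ext'
      intro v b
      simp only [LinearMap.comp_apply, hρB, LinearMap.lTensor_tmul, hΦ, LinearMap.snd_apply,
        auxFB_apply, hjB, TensorProduct.mk_apply, LinearMap.flip_apply, hpB,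
        LinearMap.sub_apply, LinearMap.id_apply]
      rw [TensorProduct.smul_tmul, Algebra.algebraMap_eq_smul_one, TensorProduct.tmul_sub]
    have e1 := congrFun (congrArg DFunLike.coe h1) q.1
    have e2 := congrFun (congrArg DFunLike.coe h2) q.1
    have e3 := congrFun (congrArg DFunLike.coe h3) q.2
    have e4 := congrFun (congrArg DFunLike.coe h4) q.2
    simp only [LinearMap.comp_apply, LinearMap.id_apply, LinearMap.zero_apply,
      LinearMap.sub_apply, LinearMap.fst_apply, LinearMap.snd_apply] at e1 e2 e3 e4
    have : Φ (ρA q.1 + ρB q.2) = (q.1 + 0, jB (pA q.1) + (q.2 - jB (pB q.2))) := by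
      rw [map_add]
      ext
      · show (Φ (ρA q.1)).1 + (Φ (ρB q.2)).1 = _; rw [e1, e3]
      · show (Φ (ρA q.1)).2 + (Φ (ρB q.2)).2 = _; rw [e2, e4]
    rw [this, h]
    ext <;> simp
end
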